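/- Let q be a prime power, ℓ a divisor of q − 1, and let p₁, …, p_r be all the primes dividing q − 1 that do not divide ℓ. Let N(l₁, l₂) count elements α in some fixed finite set such that α is l₁-free and g(α) is l₂-free (for a fixed function g on F_q avoiding poles). Then N(q−1, q−1) ≥ ∑_{i=1}^r N(p_i ℓ, ℓ) + ∑_{i=1}^r N(ℓ, p_i ℓ) − (2r − 1)·N(ℓ, ℓ). -/

import Mathlib

open scoped Classical

/-- `α ∈ F_q^*` is `s`-free if for every divisor `d ≠ 1` of `s`,
`α` is not a `d`-th power in `F_q`. -/
def IsFree {F : Type*} [Field F] [Fintype F] (s : ℕ) (α : Fˣ) : Prop :=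
  ∀ d : ℕ, d ∣ s → d ≠ 1 → ¬∃ β : F, β ^ d = (α : F)

lemma isFree_of_dvd {F : Type*} [Field F] [Fintype F] {s e : ℕ} (h : e ∣ s) {α : Fˣ}
    (hs : IsFree s α) : IsFree e α :=
  fun d hd => hs d (hd.trans h)

lemma isFree_full {F : Type*} [Field F] [Fintype F]
    {q ℓ : ℕ} (hq1 : q - 1 ≠ 0) {r : ℕ} {p : Fin r → ℕ}
    (hall : ∀ s : ℕ, s.Prime → s ∣ q - 1 → ¬ s ∣ ℓ → ∃ i, p i = s)
    (α : Fˣ) (h1 : IsFree ℓ α) (h2 : ∀ i, IsFree (p i * ℓ) α) :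
    IsFree (q - 1) α := by
  rintro d hd hd1 ⟨β, hβ⟩
  have hd0 : d ≠ 0 := by rintro rfl; exact hq1 (Nat.eq_zero_of_zero_dvd hd)
  obtain ⟨s, hsp, hsd⟩ := Nat.exists_prime_and_dvd hd1
  have hpow : ∃ γ : F, γ ^ s = (α : F) := by
    refine ⟨β ^ (d / s), ?_⟩
    rw [← pow_mul, Nat.div_mul_cancel hsd, hβ]
  by_cases hsl : s ∣ ℓ
  · exact h1 s hsl hsp.ne_one hpow
  · obtain ⟨i, hi⟩ := hall s hsp (hsd.trans hd) hsl
    exact h2 i s (hi ▸ Dvd.intro ℓ rfl) hsp.ne_one hpow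

lemma sum_ite_le_card {r : ℕ} (P : Fin r → Prop) :
    ∑ i, (if P i then (1 : ℤ) else 0) ≤ r := by
  calc ∑ i, (if P i then (1 : ℤ) else 0) ≤ ∑ _i : Fin r, (1 : ℤ) := by
        apply Finset.sum_le_sum; intro i _; split <;> norm_num
    _ = r := by simp

lemma sum_ite_le_sub {r : ℕ} (P : Fin r → Prop) (h : ¬ ∀ i, P i) :
    ∑ i, (if P i then (1 : ℤ) else 0) ≤ (r : ℤ) - 1 := by
  push_neg at h
  obtain ⟨i₀, hi₀⟩ := h
  rw [← Finset.sum_erase_add _ _ (Finset.mem_univ i₀), if_neg hi₀, add_zero]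
  calc ∑ i ∈ Finset.univ.erase i₀, (if P i then (1 : ℤ) else 0)
      ≤ ∑ _i ∈ Finset.univ.erase i₀, (1 : ℤ) := by
        apply Finset.sum_le_sum; intro i _; split <;> norm_num
    _ = ((Finset.univ.erase i₀).card : ℤ) := by simp
    _ = (r : ℤ) - 1 := by
        rw [Finset.card_erase_of_mem (Finset.mem_univ i₀)]
        simp only [Finset.card_univ, Fintype.card_fin]
        have : 1 ≤ r := i₀.pos
        omega

theorem sieve_inequality (F : Type*) [Field F] [Fintype F]
    (q : ℕ) (hq : Fintype.card F = q)
    (ℓ : ℕ) (hℓ : ℓ ∣ q - 1)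
    (r : ℕ) (p : Fin r → ℕ) (hp : ∀ i, (p i).Prime) (hinj : Function.Injective p)
    (hdvd : ∀ i, p i ∣ q - 1) (hndvd : ∀ i, ¬ p i ∣ ℓ)
    (hall : ∀ s : ℕ, s.Prime → s ∣ q - 1 → ¬ s ∣ ℓ → ∃ i, p i = s)
    (A : Finset Fˣ) (g : Fˣ → Fˣ)
    (N : ℕ → ℕ → ℕ)
    (hN : ∀ l₁ l₂ : ℕ, N l₁ l₂ =
      (A.filter (fun α => IsFree l₁ α ∧ IsFree l₂ (g α))).card) :
    (N (q - 1) (q - 1) : ℤ) ≥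
      ∑ i, (N (p i * ℓ) ℓ : ℤ) + ∑ i, (N ℓ (p i * ℓ) : ℤ)
        - (2 * r - 1) * (N ℓ ℓ : ℤ) := by
  have hq1 : q - 1 ≠ 0 := by
    have : 1 < Fintype.card F := Fintype.one_lt_card
    omega
  have key : ∀ l₁ l₂ : ℕ, (N l₁ l₂ : ℤ) =
      ∑ α ∈ A, (if IsFree l₁ α ∧ IsFree l₂ (g α) then (1 : ℤ) else 0) := by
    intro l₁ l₂
    rw [hN, Finset.card_filter, Nat.cast_sum]
    simp [apply_ite (Nat.cast : ℕ → ℤ)]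
  simp only [key]
  rw [Finset.sum_comm, Finset.sum_comm (s := Finset.univ) (t := A)
    (f := fun i α => if IsFree ℓ α ∧ IsFree (p i * ℓ) (g α) then (1 : ℤ) else 0),
    Finset.mul_sum, ← Finset.sum_add_distrib, ← Finset.sum_sub_distrib]
  apply Finset.sum_le_sum
  intro α _
  by_cases hc : IsFree ℓ α ∧ IsFree ℓ (g α)
  · have hC : (if IsFree ℓ α ∧ IsFree ℓ (g α) then (1 : ℤ) else 0) = 1 := if_pos hc
    have hA : ∀ i, (if IsFree (p i * ℓ) α ∧ IsFree ℓ (g α) then (1 : ℤ) else 0)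
        = (if IsFree (p i * ℓ) α then (1 : ℤ) else 0) := by
      intro i; by_cases h : IsFree (p i * ℓ) α <;> simp [h, hc.2]
    have hB : ∀ i, (if IsFree ℓ α ∧ IsFree (p i * ℓ) (g α) then (1 : ℤ) else 0)
        = (if IsFree (p i * ℓ) (g α) then (1 : ℤ) else 0) := by
      intro i; by_cases h : IsFree (p i * ℓ) (g α) <;> simp [h, hc.1]
    simp only [hC, hA, hB, mul_one]
    by_cases hAll : (∀ i, IsFree (p i * ℓ) α) ∧ (∀ i, IsFree (p i * ℓ) (g α))
    · have hf : IsFree (q - 1) α ∧ IsFree (q - 1) (g α) :=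
        ⟨isFree_full hq1 hall α hc.1 hAll.1, isFree_full hq1 hall (g α) hc.2 hAll.2⟩
      rw [if_pos hf]
      have h1 := sum_ite_le_card (fun i => IsFree (p i * ℓ) α)
      have h2 := sum_ite_le_card (fun i => IsFree (p i * ℓ) (g α))
      linarith
    · have hf : (0 : ℤ) ≤ (if IsFree (q - 1) α ∧ IsFree (q - 1) (g α) then (1 : ℤ) else 0) := by
        split <;> norm_num
      rw [not_and_or] at hAll
      rcases hAll with h | h
      · have h1 := sum_ite_le_sub (fun i => IsFree (p i * ℓ) α) h
        have h2 := sum_ite_le_card (fun i => IsFree (p i * ℓ) (g α))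
        linarith
      · have h1 := sum_ite_le_card (fun i => IsFree (p i * ℓ) α)
        have h2 := sum_ite_le_sub (fun i => IsFree (p i * ℓ) (g α)) h
        linarith
  · have hC : (if IsFree ℓ α ∧ IsFree ℓ (g α) then (1 : ℤ) else 0) = 0 := if_neg hc
    have hA : ∀ i, (if IsFree (p i * ℓ) α ∧ IsFree ℓ (g α) then (1 : ℤ) else 0) = 0 := by
      intro i
      apply if_neg
      rintro ⟨h1, h2⟩
      exact hc ⟨isFree_of_dvd (Dvd.intro_left (p i) rfl) h1, h2⟩
    have hB : ∀ i, (if IsFree ℓ α ∧ IsFree (p i * ℓ) (g α) then (1 : ℤ) else 0) = 0 := by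
      intro i
      apply if_neg
      rintro ⟨h1, h2⟩
      exact hc ⟨h1, isFree_of_dvd (Dvd.intro_left (p i) rfl) h2⟩
    simp only [hC, hA, hB, Finset.sum_const_zero, mul_zero, add_zero, sub_zero]
    split <;> norm_num
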